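/- For r > 1 and all real x ≥ 1, the function f(x) = x(1 + 1/x)^r satisfies f(x+1) − f(x) ≤ 1. -/

import Mathlib

open Real Set

lemma bern_aux (r t : ℝ) (hr : 1 ≤ r) (ht : 1 ≤ t) :
    t ^ r - 1 ≤ r * t ^ (r - 1) * (t - 1) := by
  have ht0 : (0:ℝ) < t := lt_of_lt_of_le one_pos ht
  have hs : -1 ≤ 1 / t - 1 := by
    have : 0 < 1 / t := by positivity
    linarith
  have h := one_add_mul_self_le_rpow_one_add hs hr
  rw [show (1 + (1 / t - 1)) = t⁻¹ by ring, Real.inv_rpow ht0.le] at h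
  have htr : 0 < t ^ r := Real.rpow_pos_of_pos ht0 r
  have hsplit : t ^ (r - 1) * t = t ^ r := by
    rw [← Real.rpow_add_one ht0.ne' (r - 1)]; ring_nf
  have h2 : (1 + r * (1 / t - 1)) * t ^ r ≤ 1 := by
    have := mul_le_mul_of_nonneg_right h htr.le
    rwa [inv_mul_cancel₀ htr.ne'] at this
  have h5 : 1 / t * t ^ r = t ^ (r - 1) := by
    rw [← hsplit]; field_simp
  rw [show (1 + r * (1 / t - 1)) * t ^ r
      = t ^ r + r * (1 / t * t ^ r) - r * t ^ r by ring, h5] at h2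
  rw [show r * t ^ (r - 1) * (t - 1)
      = r * (t ^ (r - 1) * t) - r * t ^ (r - 1) by ring, hsplit]
  linarith

theorem f_difference_le_one (r : ℝ) (hr : 1 < r) (x : ℝ) (hx : 1 ≤ x) :
    (x + 1) * (1 + 1 / (x + 1)) ^ r - x * (1 + 1 / x) ^ r ≤ 1 := by
  set g : ℝ → ℝ := fun y => y * (1 + 1 / y) ^ r - y with hg
  have key : ∀ y : ℝ, 0 < y →
      HasDerivAt g ((1 + 1/y) ^ r - 1 - r / y * (1 + 1/y) ^ (r - 1)) y := by
    intro y hy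
    have hy0 : y ≠ 0 := ne_of_gt hy
    have h1 : HasDerivAt (fun z : ℝ => 1 + 1 / z) (-(1 / y ^ 2)) y := by
      simpa using (hasDerivAt_inv hy0).const_add 1
    have hpos : (0:ℝ) < 1 + 1 / y := by positivity
    have h2 : HasDerivAt (fun z : ℝ => (1 + 1 / z) ^ r)
        (-(1 / y ^ 2) * r * (1 + 1 / y) ^ (r - 1)) y :=
      h1.rpow_const (Or.inl hpos.ne')
    have h3 := (hasDerivAt_id y).mul h2
    have h4 := h3.sub (hasDerivAt_id y)
    refine h4.congr_deriv ?_
    simp only [id]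
    field_simp
    ring
  have hderiv_nonpos : ∀ y : ℝ, 1 ≤ y →
      (1 + 1/y) ^ r - 1 - r / y * (1 + 1/y) ^ (r - 1) ≤ 0 := by
    intro y hy
    have hy0 : (0:ℝ) < y := lt_of_lt_of_le one_pos hy
    have ht : (1:ℝ) ≤ 1 + 1 / y := by
      have : 0 < 1 / y := by positivity
      linarith
    have h := bern_aux r (1 + 1 / y) hr.le ht
    have : (1 + 1 / y - 1) = 1 / y := by ring
    rw [this] at h
    have : r * (1 + 1 / y) ^ (r - 1) * (1 / y) = r / y * (1 + 1 / y) ^ (r - 1) := by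
      ring
    linarith [h, this ▸ h]
  have hanti : AntitoneOn g (Ici 1) := by
    apply antitoneOn_of_deriv_nonpos (convex_Ici 1)
    · intro y hy
      exact ((key y (lt_of_lt_of_le one_pos hy)).differentiableAt).continuousAt.continuousWithinAt
    · intro y hy
      rw [interior_Ici] at hy
      exact (key y (lt_trans one_pos hy)).differentiableAt.differentiableWithinAt
    · intro y hy
      rw [interior_Ici] at hy
      rw [(key y (lt_trans one_pos hy)).deriv]
      exact hderiv_nonpos y hy.le
  have hle : g (x + 1) ≤ g x := hanti (mem_Ici.mpr hx) (mem_Ici.mpr (by linarith)) (by linarith)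
  simp only [hg] at hle
  linarith
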